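/- Let R be a ring and A = Σ_{i=1}^k t^i A_i with A_i ∈ M_n(R). Define the companion-type block matrix A^□ over R of size kn with first block row (A_1, A_2, …, A_k), identity blocks I_n on the subdiagonal, and zeros elsewhere. Then det-free identity: (I_{kn} − t·A^□) can be transformed by elementary row and column operations over R[t] into (I_n − A(t)) ⊕ I_{(k−1)n}, i.e., I − tA^□ is El(R[t])-equivalent to (I − A) ⊕ I (a form of the Higman trick/linearization). -/

import Mathlib

open Matrix Polynomial

/-- `E` is an elementary matrix: the identity altered in a single off-diagonal entry. -/
def IsElementary {ι : Type*} [DecidableEq ι] {S : Type*} [Semiring S] (E : Matrix ι ι S) : Prop :=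
  ∃ i j c, i ≠ j ∧ E = 1 + Matrix.single i j c

/-- `E` is a product of elementary matrices. -/
def IsElemProd {ι : Type*} [DecidableEq ι] [Fintype ι] {S : Type*} [Semiring S]
    (E : Matrix ι ι S) : Prop :=
  ∃ L : List (Matrix ι ι S), (∀ X ∈ L, IsElementary X) ∧ E = L.prod

section Aux
variable {ι : Type*} [DecidableEq ι] [Fintype ι] {S : Type*} [Ring S]

lemma isElemProd_one : IsElemProd (1 : Matrix ι ι S) :=
  ⟨[], by simp, by simp⟩

lemma IsElemProd.mul {E F : Matrix ι ι S} (hE : IsElemProd E) (hF : IsElemProd F) :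
    IsElemProd (E * F) := by
  obtain ⟨L1, h1, rfl⟩ := hE
  obtain ⟨L2, h2, rfl⟩ := hF
  exact ⟨L1 ++ L2, by
    intro X hX
    rcases List.mem_append.1 hX with h | h
    exacts [h1 X h, h2 X h], (List.prod_append).symm⟩

lemma isElemProd_list (L : List (ι × ι × S))
    (h1 : ∀ x ∈ L, x.2.2 ≠ 0 → x.1 ≠ x.2.1)
    (h2 : ∀ x ∈ L, ∀ y ∈ L, x.2.2 ≠ 0 → y.2.2 ≠ 0 → x.2.1 ≠ y.1) :
    IsElemProd (1 + (L.map fun x => Matrix.single x.1 x.2.1 x.2.2).sum) := by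
  induction L with
  | nil => simpa using isElemProd_one
  | cons x L ih =>
    have hL := ih (fun y hy => h1 y (List.mem_cons_of_mem _ hy))
      (fun y hy z hz => h2 y (List.mem_cons_of_mem _ hy) z (List.mem_cons_of_mem _ hz))
    by_cases hx : x.2.2 = 0
    · simpa [hx] using hL
    · have hne : x.1 ≠ x.2.1 := h1 x (List.mem_cons_self) hx
      have hz : Matrix.single x.1 x.2.1 x.2.2 * (L.map fun y => Matrix.single y.1 y.2.1 y.2.2).sum = 0 := by
        rw [← List.sum_map_mul_left]
        apply List.sum_eq_zero
        intro M hM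
        simp only [List.mem_map] at hM
        obtain ⟨y, hy, rfl⟩ := hM
        by_cases hy0 : y.2.2 = 0
        · simp [hy0]
        · rw [Matrix.single_mul_single_of_ne]
          exact (h2 x (List.mem_cons_self) y (List.mem_cons_of_mem _ hy) hx hy0)
      have key : (1 + Matrix.single x.1 x.2.1 x.2.2) *
          (1 + (L.map fun y => Matrix.single y.1 y.2.1 y.2.2).sum)
          = 1 + ((x :: L).map fun y => Matrix.single y.1 y.2.1 y.2.2).sum := by
        simp only [List.map_cons, List.sum_cons]
        rw [mul_add, add_mul, add_mul, one_mul, one_mul, mul_one, hz, add_zero]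
        abel
      obtain ⟨L', hL', hprod⟩ := hL
      refine ⟨(1 + Matrix.single x.1 x.2.1 x.2.2) :: L', ?_, ?_⟩
      · intro X hX
        rcases List.mem_cons.1 hX with h | h
        · exact h ▸ ⟨x.1, x.2.1, x.2.2, hne, rfl⟩
        · exact hL' X h
      · rw [List.prod_cons, ← hprod, key]

lemma isElemProd_one_add (N : Matrix ι ι S)
    (h1 : ∀ p q, N p q ≠ 0 → p ≠ q)
    (h2 : ∀ p q r s, N p q ≠ 0 → N r s ≠ 0 → q ≠ r) :
    IsElemProd (1 + N) := by
  classical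
  have key := isElemProd_list ((Finset.univ : Finset (ι × ι)).toList.map
      fun x => (x.1, x.2, N x.1 x.2)) ?_ ?_
  · have hsum : ((((Finset.univ : Finset (ι × ι)).toList.map
        fun x => (x.1, x.2, N x.1 x.2)).map
        fun x => Matrix.single x.1 x.2.1 x.2.2)).sum = N := by
      rw [List.map_map]
      rw [Finset.sum_map_toList]
      conv_rhs => rw [Matrix.matrix_eq_sum_single N]
      rw [← Finset.sum_product']
      rfl
    rwa [hsum] at key
  · intro x hx hx0
    simp only [List.mem_map] at hx
    obtain ⟨y, _, rfl⟩ := hx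
    intro hc
    exact (h1 y.1 y.2 hx0) hc
  · intro x hx y hy hx0 hy0
    simp only [List.mem_map] at hx hy
    obtain ⟨x', _, rfl⟩ := hx
    obtain ⟨y', _, rfl⟩ := hy
    exact h2 x'.1 x'.2 y'.1 y'.2 hx0 hy0

lemma isElemProd_unipotent : ∀ (d : ℕ) (w : ι → ℕ) (N : Matrix ι ι S),
    (∀ p q, N p q ≠ 0 → w q < w p ∧ w p ≤ d) → IsElemProd (1 + N) := by
  intro d
  induction d with
  | zero =>
    intro w N h
    have hN : N = 0 := by
      ext p q : 1
      by_contra hn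
      have := h p q hn
      omega
    rw [hN, add_zero]
    exact isElemProd_one
  | succ d ih =>
    intro w N h
    classical
    set N₂ : Matrix ι ι S := fun p q => if w q = 0 then N p q else 0 with hN2
    set N₁ : Matrix ι ι S := fun p q => if w q = 0 then 0 else N p q with hN1
    have hsum : N = N₂ + N₁ := by
      ext p q : 1
      by_cases h0 : w q = 0 <;> (rw [Matrix.add_apply]; simp [N₁, N₂, h0])
    have hmul : N₂ * N₁ = 0 := by
      ext p q : 1
      simp only [Matrix.mul_apply, Matrix.zero_apply]
      apply Finset.sum_eq_zero
      intro r _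
      by_cases hr : w r = 0
      · have : N₁ r q = 0 := by
          by_contra hc
          have hq : w q ≠ 0 ∧ N r q ≠ 0 := by
            by_cases hq0 : w q = 0
            · exact absurd (by simp [N₁, hq0]) hc
            · refine ⟨hq0, ?_⟩; intro h0; exact hc (by simp [N₁, h0])
          have := h r q hq.2
          omega
        rw [this, mul_zero]
      · have : N₂ p r = 0 := by simp [N₂, hr]
        rw [this, zero_mul]
    have key : (1 + N₂) * (1 + N₁) = 1 + N := by
      rw [mul_add, add_mul, add_mul, one_mul, one_mul, mul_one, hmul, add_zero, hsum]
      abel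
    have e2 : IsElemProd (1 + N₂) := by
      apply isElemProd_one_add
      · intro p q hpq
        have hq : w q = 0 ∧ N p q ≠ 0 := by
          by_cases h0 : w q = 0
          · refine ⟨h0, ?_⟩; intro hz; exact hpq (by simp [N₂, hz])
          · exact absurd (by simp [N₂, h0]) hpq
        have := h p q hq.2
        intro he
        rw [he] at this
        omega
      · intro p q r s hpq hrs
        have hq : w q = 0 := by
          by_contra h0; exact hpq (by simp [N₂, h0])
        have hr : N r s ≠ 0 := by
          intro hz; exact hrs (by simp [N₂, hz])
        have := h r s hr
        intro he
        rw [he] at hq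
        omega
    have e1 : IsElemProd (1 + N₁) := by
      apply ih (fun x => w x - 1)
      intro p q hpq
      have hq : w q ≠ 0 ∧ N p q ≠ 0 := by
        by_cases h0 : w q = 0
        · exact absurd (by simp [N₁, h0]) hpq
        · refine ⟨h0, ?_⟩; intro hz; exact hpq (by simp [N₁, hz])
      have := h p q hq.2
      have := hq.1
      omega
    rw [← key]
    exact e2.mul e1

end Aux

/-- Higman linearization: with `A(t) = Σ_{i=1}^k t^i A_i` (here `a i = A_{i+1}`) and `A□`
the block companion matrix (first block row `A_1, …, A_k`, identity blocks on the
subdiagonal), `I − t·A□` is transformed by elementary row and column operations over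
`R[t]` into `(I − A(t)) ⊕ I_{(k−1)n}`. -/
theorem stmt18 {R : Type*} [Ring R] {k n : ℕ} (a : Fin k → Matrix (Fin n) (Fin n) R) :
    let Abox : Matrix (Fin k × Fin n) (Fin k × Fin n) R := fun p q =>
      (if (p.1 : ℕ) = 0 then a q.1 p.2 q.2 else 0) +
        (if (p.1 : ℕ) = (q.1 : ℕ) + 1 ∧ p.2 = q.2 then 1 else 0)
    let Apoly : Matrix (Fin n) (Fin n) (Polynomial R) :=
      ∑ i : Fin k, ((Polynomial.X : Polynomial R) ^ ((i : ℕ) + 1)) •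
        (a i).map (fun r => Polynomial.C r)
    let T : Matrix (Fin k × Fin n) (Fin k × Fin n) (Polynomial R) := fun p q =>
      if (p.1 : ℕ) = 0 ∧ (q.1 : ℕ) = 0 then (1 - Apoly) p.2 q.2
      else if p = q then 1 else 0
    ∃ E F : Matrix (Fin k × Fin n) (Fin k × Fin n) (Polynomial R),
      IsElemProd E ∧ IsElemProd F ∧
      E * (1 - (Polynomial.X : Polynomial R) • Abox.map (fun r => Polynomial.C r)) * F = T := by
  classical
  intro Abox Apoly T
  set B : Matrix (Fin k × Fin n) (Fin k × Fin n) (Polynomial R) :=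
    fun p q => if (p.1 : ℕ) = 0 then X * C (a q.1 p.2 q.2) else 0 with hB
  set NA : Matrix (Fin k × Fin n) (Fin k × Fin n) (Polynomial R) :=
    fun p q => if (p.1 : ℕ) = (q.1 : ℕ) + 1 ∧ p.2 = q.2 then X else 0 with hNA
  set NE : Matrix (Fin k × Fin n) (Fin k × Fin n) (Polynomial R) :=
    fun p q => if (p.1 : ℕ) = 0 ∧ (q.1 : ℕ) ≠ 0 then
      ∑ i : Fin k, if (q.1 : ℕ) ≤ (i : ℕ) then
        X ^ ((i : ℕ) - (q.1 : ℕ) + 1) * C (a i p.2 q.2) else 0 else 0 with hNE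
  set F : Matrix (Fin k × Fin n) (Fin k × Fin n) (Polynomial R) :=
    fun p q => if p.2 = q.2 ∧ (q.1 : ℕ) ≤ (p.1 : ℕ) then
      X ^ ((p.1 : ℕ) - (q.1 : ℕ)) else 0 with hF
  set NF : Matrix (Fin k × Fin n) (Fin k × Fin n) (Polynomial R) :=
    fun p q => if p.2 = q.2 ∧ (q.1 : ℕ) < (p.1 : ℕ) then
      X ^ ((p.1 : ℕ) - (q.1 : ℕ)) else 0 with hNF
  set G0 : Matrix (Fin k × Fin n) (Fin k × Fin n) (Polynomial R) :=
    fun p q => if (p.1 : ℕ) = 0 then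
      ∑ i : Fin k, if (q.1 : ℕ) ≤ (i : ℕ) then
        X ^ ((i : ℕ) - (q.1 : ℕ) + 1) * C (a i p.2 q.2) else 0 else 0 with hG0
  have hsplit : (X : Polynomial R) • Abox.map (fun r => C r) = B + NA := by
    ext p q : 1
    show X * C ((if (p.1 : ℕ) = 0 then a q.1 p.2 q.2 else 0) +
        (if (p.1 : ℕ) = (q.1 : ℕ) + 1 ∧ p.2 = q.2 then 1 else 0)) = B p q + NA p q
    rw [map_add, mul_add]
    congr 1
    · simp only [hB]; split <;> simp
    · simp only [hNA]; split <;> simp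
  have hFNF : F = 1 + NF := by
    ext p q : 1
    by_cases hpq : p = q
    · subst hpq
      rw [Matrix.add_apply]
      simp [hF, hNF, Matrix.one_apply]
    · have h1 : (1 : Matrix (Fin k × Fin n) (Fin k × Fin n) (Polynomial R)) p q = 0 :=
        Matrix.one_apply_ne hpq
      rw [Matrix.add_apply]
      simp only [hF, hNF, Matrix.add_apply, h1, zero_add]
      by_cases hc : p.2 = q.2 ∧ (q.1 : ℕ) < (p.1 : ℕ)
      · rw [if_pos ⟨hc.1, le_of_lt hc.2⟩, if_pos hc]
      · have hc2 : ¬(p.2 = q.2 ∧ (q.1 : ℕ) ≤ (p.1 : ℕ)) := by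
          rintro ⟨h2, hle⟩
          apply hc
          refine ⟨h2, lt_of_le_of_ne hle ?_⟩
          intro he
          exact hpq (Prod.ext (Fin.ext he.symm) h2)
        rw [if_neg hc2, if_neg hc]
  have hNAF : (1 - NA) * F = 1 := by
    ext p q : 1
    rw [Matrix.mul_apply]
    have expand : ∀ r, ((1 - NA) p r) * F r q
        = (if p = r then F r q else 0) - NA p r * F r q := by
      intro r
      rw [Matrix.sub_apply, Matrix.one_apply, sub_mul]
      congr 1
      split <;> simp
    rw [Finset.sum_congr rfl (fun r _ => expand r), Finset.sum_sub_distrib,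
      Finset.sum_ite_eq Finset.univ p (fun r => F r q), if_pos (Finset.mem_univ p)]
    rcases hp : (p.1 : ℕ) with _ | j
    · have hz : ∀ r : Fin k × Fin n, NA p r * F r q = 0 := by
        intro r
        have h0 : NA p r = 0 := by
          simp only [hNA]
          rw [if_neg ?_]
          rintro ⟨h1, -⟩
          rw [hp] at h1
          exact Nat.succ_ne_zero _ h1.symm
        rw [h0, zero_mul]
      rw [Finset.sum_eq_zero (fun r _ => hz r), sub_zero, Matrix.one_apply]
      simp only [hF]
      by_cases hq : p = q
      · have e1 : p.2 = q.2 := by rw [hq]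
        have e2 : (q.1 : ℕ) ≤ (p.1 : ℕ) := by rw [hq]
        rw [if_pos ⟨e1, e2⟩, if_pos hq]
        have e3 : (p.1 : ℕ) - (q.1 : ℕ) = 0 := by rw [hq]; exact Nat.sub_self _
        rw [e3, pow_zero]
      · rw [if_neg hq, if_neg ?_]
        rintro ⟨h2, hle⟩
        apply hq
        exact Prod.ext (Fin.ext (by omega)) h2
    · have hj : j < k := by have := p.1.isLt; omega
      set r₀ : Fin k × Fin n := (⟨j, hj⟩, p.2) with hr₀
      have hr1 : ((r₀.1 : Fin k) : ℕ) = j := rfl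
      have hr2 : r₀.2 = p.2 := rfl
      have hsum : ∑ r : Fin k × Fin n, NA p r * F r q = X * F r₀ q := by
        rw [Finset.sum_eq_single r₀]
        · congr 1
          simp [hNA, hp, hr1, hr2]
        · intro r _ hr
          have h0 : NA p r = 0 := by
            simp only [hNA]
            rw [if_neg ?_]
            rintro ⟨h1, hh2⟩
            apply hr
            have e0 : (r.1 : ℕ) = j := by rw [hp] at h1; omega
            have e1 : r.1 = (⟨j, hj⟩ : Fin k) := Fin.ext (by rw [e0])
            exact Prod.ext e1 hh2.symm
          rw [h0, zero_mul]
        · intro h; exact absurd (Finset.mem_univ r₀) h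
      rw [hsum]
      by_cases h2 : p.2 = q.2
      · by_cases hle : (q.1 : ℕ) ≤ j
        · have hpq : p ≠ q := by
            intro he; rw [he] at hp; omega
          have hFp : F p q = X ^ ((j : ℕ) - (q.1 : ℕ) + 1) := by
            simp only [hF]
            rw [if_pos ⟨h2, by omega⟩]
            congr 1
            omega
          have hFr : F r₀ q = X ^ ((j : ℕ) - (q.1 : ℕ)) := by
            simp only [hF]
            rw [if_pos ⟨h2, hle⟩]
          rw [hFp, hFr, Matrix.one_apply_ne hpq, ← pow_succ', sub_self]
        · by_cases heq : (q.1 : ℕ) = j + 1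
          · have hpq : p = q := Prod.ext (Fin.ext (by omega)) h2
            have hFp : F p q = 1 := by
              simp only [hF]
              rw [if_pos ⟨h2, by omega⟩]
              have e3 : (p.1 : ℕ) - (q.1 : ℕ) = 0 := by omega
              rw [e3, pow_zero]
            have hFr : F r₀ q = 0 := by
              simp only [hF]
              rw [if_neg ?_]
              rintro ⟨-, hc⟩
              omega
            rw [hFp, hFr, mul_zero, sub_zero, hpq, Matrix.one_apply_eq]
          · have hpq : p ≠ q := by
              intro he; rw [he] at hp; omega
            have hFp : F p q = 0 := by
              simp only [hF]
              rw [if_neg ?_]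
              rintro ⟨-, hc⟩
              omega
            have hFr : F r₀ q = 0 := by
              simp only [hF]
              rw [if_neg ?_]
              rintro ⟨-, hc⟩
              omega
            rw [hFp, hFr, mul_zero, sub_zero, Matrix.one_apply_ne hpq]
      · have hpq : p ≠ q := fun he => h2 (congrArg Prod.snd he)
        have hFp : F p q = 0 := by
          simp only [hF]
          rw [if_neg ?_]
          rintro ⟨hc, -⟩
          exact h2 hc
        have hFr : F r₀ q = 0 := by
          simp only [hF]
          rw [if_neg ?_]
          rintro ⟨hc, -⟩
          exact h2 (hr2 ▸ hc)
        rw [hFp, hFr, mul_zero, sub_zero, Matrix.one_apply_ne hpq]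
  have hNEB : NE * B = 0 := by
    ext p q : 1
    simp only [Matrix.mul_apply, Matrix.zero_apply]
    apply Finset.sum_eq_zero
    intro r _
    by_cases hr : (r.1 : ℕ) = 0
    · have h0 : NE p r = 0 := by simp only [hNE]; rw [if_neg (by tauto)]
      rw [h0, zero_mul]
    · have h0 : B r q = 0 := by simp only [hB]; rw [if_neg hr]
      rw [h0, mul_zero]
  have hBF : B * F = G0 := by
    ext p q : 1
    rw [Matrix.mul_apply]
    by_cases hp : (p.1 : ℕ) = 0
    · simp only [hG0]
      rw [if_pos hp, Fintype.sum_prod_type]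
      apply Finset.sum_congr rfl
      intro r1 _
      have step : ∀ r2 : Fin n, B p (r1, r2) * F (r1, r2) q
          = if r2 = q.2 then (if (q.1 : ℕ) ≤ (r1 : ℕ) then
              X ^ ((r1 : ℕ) - (q.1 : ℕ) + 1) * C (a r1 p.2 q.2) else 0) else 0 := by
        intro r2
        by_cases h2 : r2 = q.2
        · rw [if_pos h2]
          have eB : B p (r1, r2) = X * C (a r1 p.2 r2) := by
            simp only [hB]; rw [if_pos hp]
          by_cases hle : (q.1 : ℕ) ≤ (r1 : ℕ)
          · have eF : F (r1, r2) q = X ^ ((r1 : ℕ) - (q.1 : ℕ)) := by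
              simp only [hF]; rw [if_pos ⟨h2, hle⟩]
            rw [eB, eF, if_pos hle, h2, mul_assoc, ← Polynomial.X_pow_mul,
              ← mul_assoc, ← pow_succ']
          · have eF : F (r1, r2) q = 0 := by
              simp only [hF]; rw [if_neg (fun hc => hle hc.2)]
            rw [eF, mul_zero, if_neg hle]
        · have eF : F (r1, r2) q = 0 := by
            simp only [hF]; rw [if_neg (fun hc => h2 hc.1)]
          rw [eF, mul_zero, if_neg h2]
      rw [Finset.sum_congr rfl (fun r2 _ => step r2),
        Finset.sum_ite_eq' Finset.univ q.2, if_pos (Finset.mem_univ q.2)]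
    · simp only [hG0]
      rw [if_neg hp]
      apply Finset.sum_eq_zero
      intro r _
      have h0 : B p r = 0 := by simp only [hB]; rw [if_neg hp]
      rw [h0, zero_mul]
  have hT : 1 + NE - G0 = T := by
    ext p q : 1
    show (1 + NE - G0) p q =
      if (p.1 : ℕ) = 0 ∧ (q.1 : ℕ) = 0 then (1 - Apoly) p.2 q.2 else if p = q then 1 else 0
    by_cases hp : (p.1 : ℕ) = 0
    · by_cases hq : (q.1 : ℕ) = 0
      · rw [if_pos ⟨hp, hq⟩]
        have hp1q1 : p.1 = q.1 := Fin.ext (by rw [hp, hq])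
        have hNEv : NE p q = 0 := by simp only [hNE]; rw [if_neg (by tauto)]
        have hG0v : G0 p q = ∑ i : Fin k, X ^ ((i : ℕ) + 1) * C (a i p.2 q.2) := by
          simp only [hG0]
          rw [if_pos hp]
          apply Finset.sum_congr rfl
          intro i _
          rw [if_pos (by omega), hq, Nat.sub_zero]
        have hAp : Apoly p.2 q.2 = ∑ i : Fin k, X ^ ((i : ℕ) + 1) * C (a i p.2 q.2) := by
          show (∑ i : Fin k, (X : Polynomial R) ^ ((i : ℕ) + 1) •
            (a i).map (fun r => C r)) p.2 q.2 = _
          rw [Matrix.sum_apply]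
          apply Finset.sum_congr rfl
          intro i _
          rw [Matrix.smul_apply, Matrix.map_apply, smul_eq_mul]
        rw [Matrix.sub_apply, Matrix.add_apply, hNEv, add_zero, hG0v, Matrix.sub_apply, hAp]
        congr 1
        rw [Matrix.one_apply, Matrix.one_apply]
        by_cases h2 : p.2 = q.2
        · rw [if_pos (Prod.ext hp1q1 h2), if_pos h2]
        · rw [if_neg (fun he => h2 (congrArg Prod.snd he)), if_neg h2]
      · rw [if_neg (by tauto)]
        have hpq : p ≠ q := fun he => hq (by rw [← he]; exact hp)
        have hNEv : NE p q = ∑ i : Fin k, if (q.1 : ℕ) ≤ (i : ℕ) then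
            X ^ ((i : ℕ) - (q.1 : ℕ) + 1) * C (a i p.2 q.2) else 0 := by
          simp only [hNE]; rw [if_pos ⟨hp, hq⟩]
        have hG0v : G0 p q = ∑ i : Fin k, if (q.1 : ℕ) ≤ (i : ℕ) then
            X ^ ((i : ℕ) - (q.1 : ℕ) + 1) * C (a i p.2 q.2) else 0 := by
          simp only [hG0]; rw [if_pos hp]
        rw [Matrix.sub_apply, Matrix.add_apply, Matrix.one_apply, if_neg hpq,
          hNEv, hG0v, zero_add, sub_self]
    · have hNEv : NE p q = 0 := by simp only [hNE]; rw [if_neg (by tauto)]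
      have hG0v : G0 p q = 0 := by simp only [hG0]; rw [if_neg hp]
      rw [if_neg (fun hc => hp hc.1), Matrix.sub_apply, Matrix.add_apply,
        hNEv, hG0v, add_zero, sub_zero, Matrix.one_apply]
  refine ⟨1 + NE, F, ?_, ?_, ?_⟩
  · apply isElemProd_one_add
    · intro p q hpq
      have hc : (p.1 : ℕ) = 0 ∧ (q.1 : ℕ) ≠ 0 := by
        by_contra hc
        exact hpq (by simp only [hNE, if_neg hc])
      intro he
      rw [he] at hc
      exact hc.2 hc.1
    · intro p q r s hpq hrs
      have hcq : (q.1 : ℕ) ≠ 0 := by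
        by_contra hc
        exact hpq (by simp only [hNE]; rw [if_neg (by tauto)])
      have hcr : (r.1 : ℕ) = 0 := by
        by_contra hc
        exact hrs (by simp only [hNE]; rw [if_neg (by tauto)])
      intro he
      rw [he, hcr] at hcq
      exact hcq rfl
  · rw [hFNF]
    apply isElemProd_unipotent k (fun p => (p.1 : ℕ))
    intro p q hpq
    have hc : (q.1 : ℕ) < (p.1 : ℕ) := by
      by_contra hc
      exact hpq (by simp only [hNF]; rw [if_neg (by tauto)])
    exact ⟨hc, le_of_lt p.1.isLt⟩
  · have hNEG : NE * G0 = 0 := by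
      rw [← hBF, ← mul_assoc, hNEB, zero_mul]
    have step1 : (1 : Matrix (Fin k × Fin n) (Fin k × Fin n) (Polynomial R))
        - (X : Polynomial R) • Abox.map (fun r => C r) = (1 - NA) - B := by
      rw [hsplit]
      abel
    rw [step1, mul_assoc, sub_mul, hNAF, hBF, mul_sub, mul_one, add_mul, one_mul,
      hNEG, add_zero, hT]
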